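/- Let λ > 0 and define the Riesz kernel R_λ(y, z) = -(2λ/π) ∫_0^π (y - z cos θ)(sin θ)^{2λ-1} / (y² + z² - 2yz cos θ)^{λ+1} dθ for y ≠ z. Then there is a constant C₀ > 0 (depending only on λ) such that for all 0 < z < y, R_λ(y, z) ≤ -C₀ / (y^{2λ}(y - z)). -/

import Mathlib

open MeasureTheory Real

noncomputable def rieszKernel (lam y z : ℝ) : ℝ :=
  -(2 * lam / π) * ∫ θ in (0:ℝ)..π,
    (y - z * Real.cos θ) * (Real.sin θ) ^ (2*lam - 1) /
      (y ^ 2 + z ^ 2 - 2 * y * z * Real.cos θ) ^ (lam + 1)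

lemma sin_ge_jordan {θ : ℝ} (h0 : 0 ≤ θ) (h1 : θ ≤ π) :
    2 / π * min θ (π - θ) ≤ Real.sin θ := by
  rcases le_or_gt θ (π / 2) with h | h
  · calc 2 / π * min θ (π - θ) ≤ 2 / π * θ := by
          apply mul_le_mul_of_nonneg_left (min_le_left _ _)
          positivity
      _ ≤ Real.sin θ := Real.mul_le_sin h0 h
  · have hπθ : 0 ≤ π - θ := by linarith
    calc 2 / π * min θ (π - θ) ≤ 2 / π * (π - θ) := by
          apply mul_le_mul_of_nonneg_left (min_le_right _ _)
          positivity
      _ ≤ Real.sin (π - θ) := Real.mul_le_sin hπθ (by linarith)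
      _ = Real.sin θ := Real.sin_pi_sub θ

lemma sin_rpow_intervalIntegrable {p : ℝ} (hp : -1 < p) :
    IntervalIntegrable (fun θ => Real.sin θ ^ p) volume 0 π := by
  rcases le_or_gt 0 p with h0 | h0
  · exact (Real.continuous_sin.rpow_const (fun x => Or.inr h0)).intervalIntegrable 0 π
  · have hg : IntervalIntegrable
        (fun θ : ℝ => (2/π)^p * (θ^p + (π - θ)^p)) volume 0 π := by
      apply IntervalIntegrable.const_mul
      apply IntervalIntegrable.add
      · exact intervalIntegral.intervalIntegrable_rpow' hp
      · have h := ((intervalIntegral.intervalIntegrable_rpow' hp (a := 0) (b := π)).comp_sub_left π).symm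
        simpa using h
    refine hg.mono_fun ?_ ?_
    · exact (Real.measurable_sin.pow_const p).aestronglyMeasurable
    · rw [Set.uIoc_of_le Real.pi_pos.le]
      filter_upwards [ae_restrict_mem measurableSet_Ioc] with θ hθ
      have hs0 : 0 ≤ Real.sin θ := Real.sin_nonneg_of_nonneg_of_le_pi hθ.1.le hθ.2
      have hrhs : 0 ≤ (2/π)^p * (θ^p + (π - θ)^p) := by
        have h1 : 0 ≤ (2/π:ℝ)^p := Real.rpow_nonneg (by positivity) p
        have h2 : (0:ℝ) ≤ θ^p := Real.rpow_nonneg hθ.1.le p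
        have h3 : (0:ℝ) ≤ (π - θ)^p := Real.rpow_nonneg (by linarith [hθ.2]) p
        positivity
      rw [Real.norm_eq_abs, Real.norm_eq_abs, abs_of_nonneg (Real.rpow_nonneg hs0 p),
        abs_of_nonneg hrhs]
      rcases eq_or_lt_of_le hθ.2 with hpi | hθπ
      · subst hpi
        rw [Real.sin_pi, Real.zero_rpow (ne_of_lt h0)]
        exact hrhs
      · have hm : 0 < min θ (π - θ) := lt_min hθ.1 (by linarith)
        have hjs : 2 / π * min θ (π - θ) ≤ Real.sin θ :=
          sin_ge_jordan hθ.1.le hθ.2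
        have h2π : (0:ℝ) < 2 / π * min θ (π - θ) := by
          have : (0:ℝ) < 2 / π := by positivity
          positivity
        have key : Real.sin θ ^ p ≤ (2 / π * min θ (π - θ)) ^ p :=
          Real.rpow_le_rpow_of_nonpos h2π hjs h0.le
        have hmul : (2 / π * min θ (π - θ)) ^ p = (2/π)^p * (min θ (π - θ))^p :=
          Real.mul_rpow (by positivity) hm.le
        have hminle : (min θ (π - θ))^p ≤ θ^p + (π - θ)^p := by
          rcases min_choice θ (π - θ) with h | h <;> rw [h]
          · have : (0:ℝ) ≤ (π - θ)^p := Real.rpow_nonneg (by linarith) p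
            linarith
          · have : (0:ℝ) ≤ θ^p := Real.rpow_nonneg hθ.1.le p
            linarith
        calc Real.sin θ ^ p ≤ (2/π)^p * (min θ (π - θ))^p := by rw [← hmul]; exact key
          _ ≤ (2/π)^p * (θ^p + (π - θ)^p) := by
              apply mul_le_mul_of_nonneg_left hminle (Real.rpow_nonneg (by positivity) p)

lemma final_alg {lam pi k a P2 Yl Al : ℝ} (hlam : lam ≠ 0) (hpi : pi ≠ 0) (ha : a ≠ 0)
    (hP2 : P2 ≠ 0) (hYl : Yl ≠ 0) (hAl : Al ≠ 0) :
    -(2 * lam / pi) * (a * k / (P2 * (Al * a ^ 2)) * (Al / Yl / (2 * lam))) =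
      -(k / (pi * P2)) / (Yl * a) := by
  field_simp

theorem rieszKernel_lower_bound (lam : ℝ) (hlam : 0 < lam) :
    ∃ C₀ > (0:ℝ), ∀ y z : ℝ, 0 < z → z < y →
      rieszKernel lam y z ≤ -C₀ / (y ^ (2*lam) * (y - z)) := by
  have hπ : (0:ℝ) < π := Real.pi_pos
  set p : ℝ := 2 * lam - 1 with hpdef
  have hp1 : -1 < p := by simp only [hpdef]; linarith
  set k : ℝ := min ((2/π)^p) 1 with hkdef
  have hk0 : 0 < k := lt_min (Real.rpow_pos_of_pos (by positivity) p) one_pos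
  have hk1 : k ≤ 1 := min_le_right _ _
  refine ⟨k / (π * 2^(lam+1)), by positivity, ?_⟩
  intro y z hz hzy
  have hy : 0 < y := hz.trans hzy
  have ha : 0 < y - z := by linarith
  set a : ℝ := y - z with hadef
  set δ : ℝ := a / y with hδdef
  have hδ0 : 0 < δ := div_pos ha hy
  have hδ1 : δ < 1 := (div_lt_one hy).mpr (by linarith)
  have hδπ2 : δ < π / 2 := by
    have : (3:ℝ) < π := Real.pi_gt_three
    linarith
  have hδπ : δ ≤ π := by linarith
  set f : ℝ → ℝ := fun θ => (y - z * Real.cos θ) * (Real.sin θ) ^ p /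
      (y ^ 2 + z ^ 2 - 2 * y * z * Real.cos θ) ^ (lam + 1) with hfdef
  -- basic bounds
  have hnum : ∀ θ : ℝ, a ≤ y - z * Real.cos θ := by
    intro θ
    have := Real.cos_le_one θ
    nlinarith
  have hnum2 : ∀ θ : ℝ, y - z * Real.cos θ ≤ 2 * y := by
    intro θ
    have := Real.neg_one_le_cos θ
    nlinarith
  have hden : ∀ θ : ℝ, a^2 ≤ y ^ 2 + z ^ 2 - 2 * y * z * Real.cos θ := by
    intro θ
    have h1 := Real.cos_le_one θ
    have h2 : 0 ≤ y * z * (1 - Real.cos θ) :=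
      mul_nonneg (mul_pos hy hz).le (by linarith)
    rw [hadef]
    nlinarith
  have hdenpos : ∀ θ : ℝ, 0 < y ^ 2 + z ^ 2 - 2 * y * z * Real.cos θ := by
    intro θ
    have h := hden θ
    nlinarith
  -- integrability of f on [0, π]
  have hfmeas : AEStronglyMeasurable f (volume.restrict (Set.uIoc (0:ℝ) π)) := by
    apply Measurable.aestronglyMeasurable
    apply Measurable.div
    · exact (measurable_const.sub (Real.measurable_cos.const_mul z)).mul
        (Real.measurable_sin.pow_const p)
    · exact (measurable_const.sub (Real.measurable_cos.const_mul (2 * y * z))).pow_const (lam+1)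
  have hfint : IntervalIntegrable f volume 0 π := by
    have hg : IntervalIntegrable
        (fun θ : ℝ => (2 * y / (a^2)^(lam+1)) * Real.sin θ ^ p) volume 0 π :=
      (sin_rpow_intervalIntegrable hp1).const_mul _
    refine hg.mono_fun hfmeas ?_
    rw [Set.uIoc_of_le hπ.le]
    filter_upwards [ae_restrict_mem measurableSet_Ioc] with θ hθ
    have hs0 : 0 ≤ Real.sin θ := Real.sin_nonneg_of_nonneg_of_le_pi hθ.1.le hθ.2
    have hsp : 0 ≤ Real.sin θ ^ p := Real.rpow_nonneg hs0 p
    have hdθ : 0 < (y ^ 2 + z ^ 2 - 2 * y * z * Real.cos θ) ^ (lam + 1) :=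
      Real.rpow_pos_of_pos (hdenpos θ) _
    have hdθ2 : (a^2)^(lam+1) ≤ (y ^ 2 + z ^ 2 - 2 * y * z * Real.cos θ) ^ (lam + 1) :=
      Real.rpow_le_rpow (by positivity) (hden θ) (by linarith)
    have hf0 : 0 ≤ f θ := by
      apply div_nonneg _ hdθ.le
      exact mul_nonneg (by linarith [hnum θ, ha]) hsp
    rw [Real.norm_eq_abs, Real.norm_eq_abs, abs_of_nonneg hf0,
      abs_of_nonneg (mul_nonneg (div_nonneg (by positivity)
        (Real.rpow_nonneg (sq_nonneg a) _)) hsp)]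
    rw [hfdef]
    simp only
    rw [div_le_iff₀ hdθ]
    calc (y - z * Real.cos θ) * Real.sin θ ^ p ≤ 2 * y * Real.sin θ ^ p := by
          apply mul_le_mul_of_nonneg_right (hnum2 θ) hsp
      _ = (2 * y / (a^2)^(lam+1) * Real.sin θ ^ p) * (a^2)^(lam+1) := by
          field_simp
      _ ≤ (2 * y / (a^2)^(lam+1) * Real.sin θ ^ p) *
            (y ^ 2 + z ^ 2 - 2 * y * z * Real.cos θ) ^ (lam + 1) := by
          apply mul_le_mul_of_nonneg_left hdθ2
          positivity
  -- lower bound function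
  set A : ℝ := a * k / (2 * a^2)^(lam+1) with hAdef
  have hA0 : 0 < A := by
    apply div_pos (by positivity) (Real.rpow_pos_of_pos (by positivity) _)
  have hgle : ∀ θ ∈ Set.Icc (0:ℝ) δ, A * θ ^ p ≤ f θ := by
    intro θ hθ
    have hθ0 : 0 ≤ θ := hθ.1
    have hθδ : θ ≤ δ := hθ.2
    have hθπ2 : θ ≤ π / 2 := le_trans hθδ hδπ2.le
    have hθp : 0 ≤ θ ^ p := Real.rpow_nonneg hθ0 p
    -- sin θ ^ p ≥ k * θ ^ p
    have hs : k * θ ^ p ≤ Real.sin θ ^ p := by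
      rcases eq_or_lt_of_le hθ0 with h0 | h0
      · rcases lt_trichotomy p 0 with hc | hc | hc
        · rw [← h0, Real.zero_rpow (ne_of_lt hc)]
          simp [Real.rpow_nonneg]
        · rw [← h0, hc]
          simpa using hk1
        · rw [← h0, Real.zero_rpow (ne_of_gt hc)]
          simp [Real.rpow_nonneg]
      · rcases le_or_gt 0 p with hc | hc
        · have hj : 2 / π * θ ≤ Real.sin θ := Real.mul_le_sin hθ0 hθπ2
          have : (2/π * θ) ^ p ≤ Real.sin θ ^ p :=
            Real.rpow_le_rpow (by positivity) hj hc
          rw [Real.mul_rpow (by positivity) hθ0] at this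
          calc k * θ ^ p ≤ (2/π)^p * θ ^ p := by
                apply mul_le_mul_of_nonneg_right (min_le_left _ _) hθp
            _ ≤ Real.sin θ ^ p := this
        · have hsinpos : 0 < Real.sin θ := Real.sin_pos_of_pos_of_lt_pi h0 (by linarith [hθπ2])
          have hsinle : Real.sin θ ≤ θ := Real.sin_le hθ0
          have : θ ^ p ≤ Real.sin θ ^ p :=
            Real.rpow_le_rpow_of_nonpos hsinpos hsinle hc.le
          calc k * θ ^ p ≤ 1 * θ ^ p := mul_le_mul_of_nonneg_right hk1 hθp
            _ = θ ^ p := one_mul _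
            _ ≤ Real.sin θ ^ p := this
    -- denominator upper bound
    have hdub : y ^ 2 + z ^ 2 - 2 * y * z * Real.cos θ ≤ 2 * a^2 := by
      have hcos : 1 - θ^2/2 ≤ Real.cos θ := Real.one_sub_sq_div_two_le_cos
      have hθy : y * θ ≤ a := by
        calc y * θ ≤ y * δ := mul_le_mul_of_nonneg_left hθδ hy.le
          _ = a := by rw [hδdef]; field_simp
      have hsq : (y * θ) * (y * θ) ≤ a * a :=
        mul_le_mul hθy hθy (mul_nonneg hy.le hθ0) ha.le
      have hzy2 : z * θ^2 ≤ y * θ^2 :=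
        mul_le_mul_of_nonneg_right hzy.le (sq_nonneg θ)
      rw [hadef] at hsq ⊢
      nlinarith [sq_nonneg θ, mul_pos hy hz, mul_nonneg hy.le (sq_nonneg θ),
        mul_le_mul_of_nonneg_left hzy2 hy.le]
    have hdlb : 0 < (y ^ 2 + z ^ 2 - 2 * y * z * Real.cos θ) ^ (lam+1) :=
      Real.rpow_pos_of_pos (hdenpos θ) _
    have hdub' : (y ^ 2 + z ^ 2 - 2 * y * z * Real.cos θ) ^ (lam+1) ≤ (2 * a^2)^(lam+1) :=
      Real.rpow_le_rpow (hdenpos θ).le hdub (by linarith)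
    have hnum' : a * (k * θ ^ p) ≤ (y - z * Real.cos θ) * Real.sin θ ^ p := by
      apply mul_le_mul (hnum θ) hs (by positivity) (by linarith [hnum θ])
    calc A * θ ^ p = a * (k * θ ^ p) / (2 * a^2)^(lam+1) := by
          rw [hAdef]; ring
      _ ≤ (y - z * Real.cos θ) * Real.sin θ ^ p /
            (y ^ 2 + z ^ 2 - 2 * y * z * Real.cos θ) ^ (lam + 1) := by
          have hsθ : (0:ℝ) ≤ Real.sin θ :=
            Real.sin_nonneg_of_nonneg_of_le_pi hθ0 (by linarith [hθπ2, hπ])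
          have hsp2 : (0:ℝ) ≤ Real.sin θ ^ p := Real.rpow_nonneg hsθ p
          apply div_le_div₀ (mul_nonneg (by linarith [hnum θ, ha]) hsp2) hnum' hdlb hdub'
      _ = f θ := rfl
  -- integral comparison
  have hgint : IntervalIntegrable (fun θ : ℝ => A * θ ^ p) volume 0 δ :=
    (intervalIntegral.intervalIntegrable_rpow' hp1).const_mul A
  have hfintδ : IntervalIntegrable f volume 0 δ := by
    apply hfint.mono_set
    rw [Set.uIcc_of_le hδ0.le, Set.uIcc_of_le hπ.le]
    exact Set.Icc_subset_Icc le_rfl hδπ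
  have step1 : (∫ θ in (0:ℝ)..δ, A * θ ^ p) ≤ ∫ θ in (0:ℝ)..δ, f θ :=
    intervalIntegral.integral_mono_on hδ0.le hgint hfintδ hgle
  have step2 : (∫ θ in (0:ℝ)..δ, f θ) ≤ ∫ θ in (0:ℝ)..π, f θ := by
    apply intervalIntegral.integral_mono_interval le_rfl hδ0.le hδπ _ hfint
    filter_upwards [ae_restrict_mem measurableSet_Ioc] with θ hθ
    have hs0 : 0 ≤ Real.sin θ := Real.sin_nonneg_of_nonneg_of_le_pi hθ.1.le hθ.2
    have h1 := hnum θ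
    have h2 := (hdenpos θ)
    apply div_nonneg _ (Real.rpow_nonneg h2.le _)
    have := Real.rpow_nonneg hs0 p
    nlinarith
  -- compute the lower integral
  have hcomp : (∫ θ in (0:ℝ)..δ, A * θ ^ p) = A * (δ ^ (2*lam) / (2*lam)) := by
    rw [intervalIntegral.integral_const_mul, integral_rpow (Or.inl hp1)]
    have hpe : p + 1 = 2 * lam := by rw [hpdef]; ring
    rw [hpe, Real.zero_rpow (by positivity : (2*lam) ≠ 0)]
    ring
  -- final algebra
  have hIlb : A * (δ ^ (2*lam) / (2*lam)) ≤ ∫ θ in (0:ℝ)..π, f θ := by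
    rw [← hcomp]; exact le_trans step1 step2
  have hkey : rieszKernel lam y z ≤ -(2*lam/π) * (A * (δ ^ (2*lam) / (2*lam))) := by
    unfold rieszKernel
    rw [neg_mul, neg_mul, neg_le_neg_iff]
    apply mul_le_mul_of_nonneg_left hIlb (by positivity)
  refine hkey.trans (le_of_eq ?_)
  -- show -(2λ/π) * (A * δ^{2λ}/(2λ)) = -C₀ / (y^{2λ} (y-z))
  have hP2 : (0:ℝ) < (2:ℝ)^(lam+1) := Real.rpow_pos_of_pos two_pos _
  have hYlam : (0:ℝ) < y^(2*lam) := Real.rpow_pos_of_pos hy _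
  have hAlam : (0:ℝ) < a^(2*lam) := Real.rpow_pos_of_pos ha _
  have h1 : (2 * a^2)^(lam+1) = 2^(lam+1) * (a^(2*lam) * a^2) := by
    rw [Real.mul_rpow (by norm_num) (by positivity)]
    congr 1
    rw [← Real.rpow_two a, ← Real.rpow_mul ha.le, ← Real.rpow_add ha]
    congr 1
    ring
  have h2 : δ ^ (2*lam) = a^(2*lam) / y^(2*lam) := Real.div_rpow ha.le hy.le _
  rw [hAdef, h1, h2]
  exact final_alg (ne_of_gt hlam) (ne_of_gt hπ) (ne_of_gt ha) (ne_of_gt hP2)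
    (ne_of_gt hYlam) (ne_of_gt hAlam)
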